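/- For $0 < q < 1$, the sequence $d_k := \frac{q^{k+1} - q^{-k-1}}{q - q^{-1}}$ satisfies: for all $k, n \geq 0$ and $0 \leq r \leq \min(k,n)$ with $l = k + n - 2r$, $(1-q^2)^3 \leq \frac{d_k d_n}{d_l d_r^2} \leq (1-q^2)^{-2}$. -/

import Mathlib

set_option maxHeartbeats 800000 in
/-- For `0 < q < 1` and `d_k = (q^{k+1} - q^{-(k+1)})/(q - q⁻¹)`:
for all `k, n ≥ 0`, `r ≤ min k n`, `l = k + n - 2r`,
`(1-q²)³ ≤ d_k d_n / (d_l d_r²) ≤ (1-q²)⁻²`. -/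
theorem stmt6 (q : ℝ) (hq0 : 0 < q) (hq1 : q < 1)
    (d : ℕ → ℝ)
    (hd : ∀ k : ℕ, d k = (q ^ ((k : ℤ) + 1) - q ^ (-((k : ℤ) + 1))) / (q - q⁻¹))
    (k n r l : ℕ) (hr : r ≤ min k n) (hl : l + 2 * r = k + n) :
    (1 - q ^ 2) ^ 3 ≤ d k * d n / (d l * d r ^ 2) ∧
      d k * d n / (d l * d r ^ 2) ≤ ((1 - q ^ 2) ^ 2)⁻¹ := by
  have hqne : q ≠ 0 := ne_of_gt hq0
  have hc : 0 < 1 - q ^ 2 := by nlinarith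
  have hcne : (1 - q ^ 2) ≠ 0 := ne_of_gt hc
  set c := 1 - q ^ 2 with hcdef
  -- rewrite d in a convenient form
  have hdq : ∀ m : ℕ, d m = (1 - q ^ (2 * m + 2)) / (c * q ^ m) := by
    intro m
    rw [hd]
    have h1 : q ^ ((m : ℤ) + 1) = q ^ (m + 1) := by
      rw [← zpow_natCast]; norm_num
    have h2 : q ^ (-((m : ℤ) + 1)) = (q ^ (m + 1))⁻¹ := by
      rw [zpow_neg, ← zpow_natCast]; norm_num
    rw [h1, h2]
    have hqq : q - q⁻¹ ≠ 0 := by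
      intro h
      have : q * q - 1 = 0 := by field_simp at h; nlinarith [h]
      nlinarith
    have hden2 : c * q ^ m ≠ 0 := mul_ne_zero hcne (pow_ne_zero _ hqne)
    rw [div_eq_div_iff hqq hden2]
    field_simp
    ring
  have hA : ∀ m : ℕ, c ≤ 1 - q ^ (2 * m + 2) := by
    intro m
    have : q ^ (2 * m + 2) ≤ q ^ 2 := by
      apply pow_le_pow_of_le_one (le_of_lt hq0) (le_of_lt hq1)
      omega
    simp only [hcdef]; linarith
  have hA1 : ∀ m : ℕ, 1 - q ^ (2 * m + 2) ≤ 1 := by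
    intro m
    have : 0 < q ^ (2 * m + 2) := pow_pos hq0 _
    linarith
  have hApos : ∀ m : ℕ, 0 < 1 - q ^ (2 * m + 2) := fun m => lt_of_lt_of_le hc (hA m)
  have hpow : q ^ k * q ^ n = q ^ l * (q ^ r) ^ 2 := by
    rw [← pow_mul, ← pow_add, ← pow_add, ← hl]; ring_nf
  set a := 1 - q ^ (2 * k + 2) with ha
  set b := 1 - q ^ (2 * n + 2) with hb
  set e := 1 - q ^ (2 * l + 2) with he
  set f := 1 - q ^ (2 * r + 2) with hf
  have ak := hA k; have an := hA n; have al := hA l; have ar := hA r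
  have ak1 := hA1 k; have an1 := hA1 n; have al1 := hA1 l; have ar1 := hA1 r
  have pk := hApos k; have pn := hApos n; have pe := hApos l; have pf := hApos r
  have key : d k * d n / (d l * d r ^ 2) = a * b * c / (e * f ^ 2) := by
    rw [hdq k, hdq n, hdq l, hdq r]
    have hQ : (q : ℝ) ^ n ≠ 0 := pow_ne_zero _ hqne
    have hP : q ^ k = q ^ l * (q ^ r) ^ 2 / q ^ n := by
      rw [eq_div_iff hQ, ← hpow]
    rw [hP]
    have hL : (q : ℝ) ^ l ≠ 0 := pow_ne_zero _ hqne
    have hR : (q : ℝ) ^ r ≠ 0 := pow_ne_zero _ hqne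
    rw [ha, hb, he, hf]
    have := pe.ne'; have := pf.ne'
    field_simp
  rw [key]
  have hden : 0 < e * f ^ 2 := by positivity
  have hef1 : e * f ^ 2 ≤ 1 := by nlinarith
  have hf2 : c ^ 2 ≤ f ^ 2 := pow_le_pow_left₀ hc.le ar 2
  have hef2 : c ^ 3 ≤ e * f ^ 2 := by
    have h := mul_le_mul al hf2 (by positivity) pe.le
    nlinarith [h]
  have hab1 : a * b ≤ 1 := by nlinarith
  have hab2 : c * c ≤ a * b := by nlinarith
  constructor
  · rw [le_div_iff₀ hden]
    calc c ^ 3 * (e * f ^ 2) ≤ c ^ 3 * 1 := by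
          exact mul_le_mul_of_nonneg_left hef1 (by positivity)
      _ = c * c * c := by ring
      _ ≤ a * b * c := mul_le_mul_of_nonneg_right hab2 hc.le
  · rw [div_le_iff₀ hden]
    calc a * b * c ≤ 1 * c := mul_le_mul_of_nonneg_right hab1 hc.le
      _ = (c ^ 2)⁻¹ * c ^ 3 := by field_simp
      _ ≤ (c ^ 2)⁻¹ * (e * f ^ 2) := mul_le_mul_of_nonneg_left hef2 (by positivity)
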